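/- For every prime p ≥ 5 and every positive integer C, there exists a finite p-group G that can be generated by two elements, with |G| > C, such that, writing exp G = p^e, one has |G^{p^{e-1}}| ≥ p^2 and G is not a Beauville group. (Hence the 'if' implication of the criterion 'G is Beauville iff p ≥ 5 and |G^{p^{e-1}}| ≥ p^2' fails for infinitely many 2-generator p-groups.) -/

import Mathlib

open Subgroup

/-- `Σ(x,y)`: the union of all conjugates of the cyclic subgroups `⟨x⟩`, `⟨y⟩`, `⟨xy⟩`. -/
def SigmaSet {G : Type*} [Group G] (x y : G) : Set G :=
  ⋃ g : G, ((zpowers (g * x * g⁻¹) : Set G) ∪ (zpowers (g * y * g⁻¹) : Set G) ∪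
    (zpowers (g * (x * y) * g⁻¹) : Set G))

/-- An (unmixed) Beauville structure on `G`. -/
def IsBeauvilleStructure {G : Type*} [Group G] (x₁ y₁ x₂ y₂ : G) : Prop :=
  closure {x₁, y₁} = ⊤ ∧ closure {x₂, y₂} = ⊤ ∧
    SigmaSet x₁ y₁ ∩ SigmaSet x₂ y₂ = {1}

/-- `G` is a Beauville group if it admits a Beauville structure. -/
def IsBeauvilleGroup (G : Type*) [Group G] : Prop :=
  ∃ x₁ y₁ x₂ y₂ : G, IsBeauvilleStructure x₁ y₁ x₂ y₂

/-- `G^n`: the subgroup generated by all `n`-th powers of elements of `G`. -/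
def powSubgroup (G : Type*) [Group G] (n : ℕ) : Subgroup G :=
  closure (Set.range fun g : G => g ^ n)

/-! ### The construction: a quotient of the wreath product `ℤ/p^m ≀ ℤ/p`. -/

section Construction

/-- the base vectors -/
abbrev Vec (p m : ℕ) := ZMod p → ZMod (p ^ m)

/-- cyclic shift -/
def shf {p m : ℕ} (k : ZMod p) (v : Vec p m) : Vec p m := fun j => v (j - k)

/-- the underlying type of the wreath product -/
@[ext]
structure Wr (p m : ℕ) where
  v : Vec p m
  k : ZMod p

namespace Wr

variable {p m : ℕ}

@[simp] theorem shf_zero (v : Vec p m) : shf 0 v = v := by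
  funext j; simp [shf]

theorem shf_shf (a b : ZMod p) (v : Vec p m) : shf a (shf b v) = shf (a + b) v := by
  funext j; simp [shf, sub_sub]

@[simp] theorem shf_add (k : ZMod p) (v w : Vec p m) :
    shf k (v + w) = shf k v + shf k w := rfl

@[simp] theorem shf_neg (k : ZMod p) (v : Vec p m) : shf k (-v) = -(shf k v) := rfl

@[simp] theorem shf_apply (k : ZMod p) (v : Vec p m) (j : ZMod p) :
    shf k v j = v (j - k) := rfl

theorem sum_shf [NeZero p] (k : ZMod p) (v : Vec p m) :
    ∑ j : ZMod p, shf k v j = ∑ j : ZMod p, v j := by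
  apply Fintype.sum_bijective (fun j : ZMod p => j - k)
  · exact (Equiv.subRight k).bijective
  · intro j; rfl

instance : Group (Wr p m) where
  mul x y := ⟨x.v + shf x.k y.v, x.k + y.k⟩
  one := ⟨0, 0⟩
  inv x := ⟨-(shf (-x.k) x.v), -x.k⟩
  mul_assoc x y z := by
    ext j
    · show (x.v + shf x.k y.v + shf (x.k + y.k) z.v) j
        = (x.v + shf x.k (y.v + shf y.k z.v)) j
      simp [shf_shf, add_assoc]
    · show x.k + y.k + z.k = x.k + (y.k + z.k)
      exact add_assoc _ _ _
  one_mul x := by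
    ext j
    · show ((0 : Vec p m) + shf 0 x.v) j = x.v j
      simp
    · show (0 : ZMod p) + x.k = x.k
      simp
  mul_one x := by
    ext j
    · show (x.v + shf x.k (0 : Vec p m)) j = x.v j
      simp [shf]
    · show x.k + 0 = x.k
      simp
  inv_mul_cancel x := by
    ext j
    · show (-(shf (-x.k) x.v) + shf (-x.k) x.v) j = (0 : Vec p m) j
      simp
    · show -x.k + x.k = 0
      simp

@[simp] theorem mul_v (x y : Wr p m) : (x * y).v = x.v + shf x.k y.v := rfl
@[simp] theorem mul_k (x y : Wr p m) : (x * y).k = x.k + y.k := rfl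
@[simp] theorem one_v : (1 : Wr p m).v = 0 := rfl
@[simp] theorem one_k : (1 : Wr p m).k = 0 := rfl
@[simp] theorem inv_v (x : Wr p m) : (x⁻¹).v = -(shf (-x.k) x.v) := rfl
@[simp] theorem inv_k (x : Wr p m) : (x⁻¹).k = -x.k := rfl

/-- the power formula in the wreath product -/
theorem pow_formula (x : Wr p m) (n : ℕ) :
    x ^ n = ⟨∑ i ∈ Finset.range n, shf ((i : ZMod p) * x.k) x.v, n • x.k⟩ := by
  induction n with
  | zero => ext j <;> simp
  | succ n ih =>
    rw [pow_succ, ih]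
    ext j
    · show (_ + shf (n • x.k) x.v) j = _
      rw [Finset.sum_range_succ]
      have : (n : ZMod p) * x.k = n • x.k := by
        rw [nsmul_eq_mul]
      rw [this]
    · show n • x.k + x.k = (n + 1) • x.k
      rw [succ_nsmul]


theorem base_pow (v : Vec p m) (n : ℕ) :
    (⟨v, 0⟩ : Wr p m) ^ n = ⟨n • v, 0⟩ := by
  rw [pow_formula]
  ext j
  · show (∑ i ∈ Finset.range n, shf ((i : ZMod p) * 0) v) j = (n • v) j
    simp [Finset.sum_apply]
  · simp

end Wr

end Construction

section Quot

open Wr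

variable (p m : ℕ) [Fact p.Prime]

instance : NeZero p := ⟨(Fact.out : p.Prime).ne_zero⟩
instance : NeZero (p ^ (m + 2)) := ⟨pow_ne_zero _ (Fact.out : p.Prime).ne_zero⟩

/-- the ring of base coefficients -/
abbrev R := ZMod (p ^ (m + 2))

/-- the normal subgroup we quotient by -/
def L : Subgroup (Wr p (m + 2)) where
  carrier := {x | x.k = 0 ∧ (∑ j : ZMod p, x.v j) = 0 ∧
    ∀ j, ∃ c, x.v j = (p : R p m) ^ (m + 1) * c}
  one_mem' := ⟨rfl, by simp, fun j => ⟨0, by simp⟩⟩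
  mul_mem' := by
    rintro x y ⟨hk, hs, hd⟩ ⟨hk', hs', hd'⟩
    refine ⟨by simp [hk, hk'], ?_, ?_⟩
    · have : (x * y).v = x.v + y.v := by rw [mul_v, hk, shf_zero]
      rw [this]
      simp only [Pi.add_apply]
      rw [Finset.sum_add_distrib, hs, hs', add_zero]
    · intro j
      obtain ⟨c, hc⟩ := hd j
      obtain ⟨c', hc'⟩ := hd' j
      refine ⟨c + c', ?_⟩
      have : (x * y).v = x.v + y.v := by rw [mul_v, hk, shf_zero]
      rw [this]
      show x.v j + y.v j = _
      rw [hc, hc', mul_add]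
  inv_mem' := by
    rintro x ⟨hk, hs, hd⟩
    have hv : (x⁻¹).v = -x.v := by rw [inv_v, hk, neg_zero, shf_zero]
    refine ⟨by simp [hk], ?_, ?_⟩
    · rw [hv]
      simp [hs]
    · intro j
      obtain ⟨c, hc⟩ := hd j
      refine ⟨-c, ?_⟩
      rw [hv]
      show -(x.v j) = _
      rw [hc, mul_neg]

theorem conj_base (g x : Wr p (m + 2)) (hx : x.k = 0) :
    g * x * g⁻¹ = ⟨shf g.k x.v, 0⟩ := by
  ext j
  · show (g.v + shf g.k x.v + shf (g.k + x.k) (-(shf (-g.k) g.v))) j = shf g.k x.v j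
    rw [hx, add_zero]
    have : shf g.k (-(shf (-g.k) g.v)) = -g.v := by
      rw [shf_neg, shf_shf, add_neg_cancel, shf_zero]
    rw [this]
    show g.v j + shf g.k x.v j + -(g.v j) = shf g.k x.v j
    ring
  · show g.k + x.k + -g.k = 0
    rw [hx]
    ring

instance : (L p m).Normal := by
  constructor
  rintro x ⟨hk, hs, hd⟩ g
  rw [conj_base p m g x hk]
  exact ⟨rfl, by rw [sum_shf]; exact hs, fun j => hd (j - g.k)⟩

/-- The group of the counterexample. -/
abbrev Gp := Wr p (m + 2) ⧸ L p m

/-- the quotient map -/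
def mkW : Wr p (m + 2) →* Gp p m := QuotientGroup.mk' (L p m)

theorem mkW_surjective : Function.Surjective (mkW p m) :=
  QuotientGroup.mk'_surjective _

instance : Finite (Wr p (m + 2)) :=
  Finite.of_surjective (fun z : Vec p (m + 2) × ZMod p => (⟨z.1, z.2⟩ : Wr p (m + 2)))
    (fun x => ⟨(x.v, x.k), rfl⟩)

instance : Finite (Gp p m) := Quotient.finite _

end Quot

section Sums

open Wr Finset

variable (p m : ℕ) [Fact p.Prime]

instance : Fact (1 < p) := ⟨(Fact.out : p.Prime).one_lt⟩

theorem sum_range_period {A : Type*} [AddCommMonoid A] (F : ZMod p → A) (N : ℕ) :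
    ∑ i ∈ Finset.range (p * N), F (i : ZMod p)
      = N • ∑ i ∈ Finset.range p, F (i : ZMod p) := by
  induction N with
  | zero => simp
  | succ N ih =>
    rw [Nat.mul_succ, Finset.range_eq_Ico,
      ← Finset.sum_Ico_consecutive _ (Nat.zero_le (p * N)) (Nat.le_add_right _ p),
      ← Finset.range_eq_Ico, ih, Finset.sum_Ico_eq_sum_range]
    have h1 : ∀ i : ℕ, ((p * N + i : ℕ) : ZMod p) = (i : ZMod p) := by
      intro i
      push_cast
      rw [ZMod.natCast_self]
      ring
    have h2 : (∑ i ∈ Finset.range (p * N + p - p * N), F ((p * N + i : ℕ) : ZMod p))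
        = ∑ i ∈ Finset.range p, F (i : ZMod p) := by
      have : p * N + p - p * N = p := by omega
      rw [this]
      exact Finset.sum_congr rfl fun i _ => by rw [h1]
    rw [h2, succ_nsmul]

theorem sum_range_univ {A : Type*} [AddCommMonoid A] (F : ZMod p → A) :
    ∑ i ∈ Finset.range p, F (i : ZMod p) = ∑ t : ZMod p, F t := by
  apply Finset.sum_nbij' (i := fun n : ℕ => (n : ZMod p)) (j := fun t : ZMod p => t.val)
  · intro a _; exact Finset.mem_univ _
  · intro t _; exact Finset.mem_range.mpr (ZMod.val_lt t)
  · intro a ha; exact ZMod.val_cast_of_lt (Finset.mem_range.mp ha)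
  · intro t _; exact ZMod.natCast_rightInverse t
  · intro a _; rfl

theorem sum_reindex {k : ZMod p} (hk : k ≠ 0) {A : Type*} [AddCommMonoid A]
    (v : ZMod p → A) (j : ZMod p) :
    ∑ t : ZMod p, v (j - t * k) = ∑ s : ZMod p, v s := by
  apply Fintype.sum_bijective (fun t : ZMod p => j - t * k)
  · have : Function.Injective (fun t : ZMod p => j - t * k) := by
      intro t₁ t₂ h
      simp only at h
      have h2 : t₁ * k = t₂ * k := by
        have := sub_right_injective h
        exact this
      exact mul_right_cancel₀ hk h2
    exact Finite.injective_iff_bijective.mp this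
  · intro t; rfl

theorem key_sum {k : ZMod p} (hk : k ≠ 0) (v : Vec p (m + 2)) (N : ℕ) :
    ∑ i ∈ Finset.range (p * N), shf ((i : ZMod p) * k) v
      = fun _ => (N : R p m) * ∑ s : ZMod p, v s := by
  funext j
  rw [Finset.sum_apply]
  have h1 : ∑ i ∈ Finset.range (p * N), shf ((i : ZMod p) * k) v j
      = ∑ i ∈ Finset.range (p * N), v (j - (i : ZMod p) * k) := rfl
  rw [h1, sum_range_period p (fun t => v (j - t * k)) N,
    sum_range_univ p (fun t => v (j - t * k)), sum_reindex p hk v j, nsmul_eq_mul]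

theorem pow_p_mul (x : Wr p (m + 2)) (hx : x.k ≠ 0) (N : ℕ) :
    x ^ (p * N) = ⟨fun _ => (N : R p m) * ∑ s : ZMod p, x.v s, 0⟩ := by
  rw [pow_formula, key_sum p m hx x.v N]
  congr 1
  rw [nsmul_eq_mul]
  push_cast
  rw [ZMod.natCast_self]
  ring

theorem base_pow' (x : Wr p (m + 2)) (hx : x.k = 0) (n : ℕ) :
    x ^ n = ⟨n • x.v, 0⟩ := by
  have : x = ⟨x.v, 0⟩ := by ext <;> simp [hx]
  rw [this, base_pow]

end Sums

section Elements

open Wr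

variable (p m : ℕ) [Fact p.Prime]

/-- cast down to `ZMod p` -/
def scast : R p m →+* ZMod p :=
  ZMod.castHom (dvd_pow_self p (Nat.succ_ne_zero (m + 1))) (ZMod p)

theorem pcast_ne {i : ℕ} (hi : i < m + 2) : (p : R p m) ^ i ≠ 0 := by
  rw [← Nat.cast_pow, Ne, ZMod.natCast_eq_zero_iff]
  intro h
  have h1 : p ^ (m + 2) ≤ p ^ i := Nat.le_of_dvd (pow_pos (Fact.out : p.Prime).pos i) h
  have h2 : p ^ i < p ^ (m + 2) := Nat.pow_lt_pow_right (Fact.out : p.Prime).one_lt hi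
  omega

theorem pcast_top : (p : R p m) ^ (m + 2) = 0 := by
  rw [← Nat.cast_pow, ZMod.natCast_self]

theorem exists_of_scast_zero (r : R p m) (h : scast p m r = 0) : ∃ d, r = (p : R p m) * d := by
  have h1 : scast p m r = ((r.val : ℕ) : ZMod p) := by
    rw [scast, ZMod.castHom_apply, ← ZMod.natCast_val]
  rw [h1, ZMod.natCast_eq_zero_iff] at h
  obtain ⟨t, ht⟩ := h
  refine ⟨(t : R p m), ?_⟩
  have h2 : r = ((r.val : ℕ) : R p m) := (ZMod.natCast_rightInverse r).symm
  rw [h2, ht]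
  push_cast
  ring

/-- indicator vector -/
def sing (l : ZMod p) (c : R p m) : Vec p (m + 2) := fun j => if j = l then c else 0

theorem sum_sing (l : ZMod p) (c : R p m) : ∑ j : ZMod p, sing p m l c j = c := by
  simp [sing]

theorem sum_const_vec (c : R p m) :
    (∑ j : ZMod p, (fun _ : ZMod p => c) j) = (p : R p m) * c := by
  rw [Finset.sum_const, Finset.card_univ, ZMod.card, nsmul_eq_mul]

/-- distinguished elements -/
def aw : Wr p (m + 2) := ⟨sing p m 0 1, 0⟩
def tw : Wr p (m + 2) := ⟨0, 1⟩
def uw : Wr p (m + 2) := ⟨sing p m 0 1, 1⟩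
def zw : Wr p (m + 2) := ⟨fun _ => (p : R p m) ^ m, 0⟩

def ael : Gp p m := mkW p m (aw p m)
def tel : Gp p m := mkW p m (tw p m)
def zel : Gp p m := mkW p m (zw p m)

theorem mkW_eq_mkW {x y : Wr p (m + 2)} :
    mkW p m x = mkW p m y ↔ x⁻¹ * y ∈ L p m := QuotientGroup.eq

theorem mkW_eq_one_iff {x : Wr p (m + 2)} : mkW p m x = 1 ↔ x ∈ L p m :=
  QuotientGroup.eq_one_iff x

theorem base_inv_mul (v w : Vec p (m + 2)) :
    (⟨v, 0⟩ : Wr p (m + 2))⁻¹ * ⟨w, 0⟩ = ⟨-v + w, 0⟩ := by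
  ext j
  · show (-(shf (-0) v) + shf (-0) w) j = (-v + w) j
    simp
  · show -0 + 0 = 0
    simp

theorem zel_ne_one : zel p m ≠ 1 := by
  intro h
  obtain ⟨-, -, hd⟩ := (mkW_eq_one_iff p m).mp h
  obtain ⟨c, hc⟩ := hd 0
  have hc' : (p : R p m) ^ m = (p : R p m) ^ (m + 1) * c := hc
  have h2 : (p : R p m) ^ (m + 1) = 0 := by
    have : (p : R p m) ^ (m + 1) = (p : R p m) ^ m * p := pow_succ _ _
    rw [this, hc', mul_assoc, mul_comm c, ← mul_assoc, ← pow_succ, pcast_top, zero_mul]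
  exact pcast_ne p m (by omega : m + 1 < m + 2) h2

end Elements

section KeyFacts

open Wr

variable (p m : ℕ) [Fact p.Prime]

theorem zw_pow (c : ℕ) :
    (zw p m) ^ c = ⟨fun _ => (c : R p m) * (p : R p m) ^ m, 0⟩ := by
  rw [base_pow' p m _ rfl]
  congr 1
  funext j
  show c • ((p : R p m) ^ m) = _
  rw [nsmul_eq_mul]

theorem zel_pow_p : zel p m ^ p = 1 := by
  rw [zel, ← map_pow]
  apply (mkW_eq_one_iff p m).mpr
  rw [zw_pow]
  refine ⟨rfl, ?_, fun j => ⟨1, ?_⟩⟩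
  · rw [sum_const_vec]
    have : (p : R p m) * ((p : R p m) * (p : R p m) ^ m) = (p : R p m) ^ (m + 2) := by ring
    rw [this, pcast_top]
  · show (p : R p m) * (p : R p m) ^ m = (p : R p m) ^ (m + 1) * 1
    ring

theorem key_identity (x : Wr p (m + 2)) (hx : x.k ≠ 0) :
    mkW p m x ^ (p ^ (m + 1))
      = zel p m ^ ((scast p m (∑ s : ZMod p, x.v s)).val) := by
  have e1 : p ^ (m + 1) = p * p ^ m := by ring
  rw [e1, ← map_pow, pow_p_mul p m x hx (p ^ m), zel, ← map_pow, zw_pow]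
  apply (mkW_eq_mkW p m).mpr
  rw [base_inv_mul]
  set s := ∑ t : ZMod p, x.v t with hs
  set c := (scast p m s).val with hc
  have hsc : scast p m (s - (c : R p m)) = 0 := by
    rw [map_sub, map_natCast, hc, ZMod.natCast_val]
    have : (ZMod.cast (scast p m s) : ZMod p) = scast p m s := by
      rw [ZMod.cast_id]
    rw [this, sub_self]
  obtain ⟨d, hd⟩ := exists_of_scast_zero p m _ hsc
  have hval : ∀ j : ZMod p,
      (-(fun _ : ZMod p => ((p ^ m : ℕ) : R p m) * s) + fun _ : ZMod p => (c : R p m) * (p : R p m) ^ m) j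
        = (p : R p m) ^ (m + 1) * (-d) := by
    intro j
    show -(((p ^ m : ℕ) : R p m) * s) + (c : R p m) * (p : R p m) ^ m = _
    push_cast
    linear_combination (-((p : R p m) ^ m)) * hd
  refine ⟨rfl, ?_, fun j => ⟨-d, hval j⟩⟩
  · calc ∑ j : ZMod p, (-(fun _ : ZMod p => ((p ^ m : ℕ) : R p m) * s)
          + fun _ : ZMod p => (c : R p m) * (p : R p m) ^ m) j
        = ∑ j : ZMod p, (fun _ : ZMod p => (p : R p m) ^ (m + 1) * (-d)) j :=
          Finset.sum_congr rfl fun j _ => hval j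
      _ = (p : R p m) * ((p : R p m) ^ (m + 1) * (-d)) := sum_const_vec p m _
      _ = 0 := by
          have : (p : R p m) * ((p : R p m) ^ (m + 1) * (-d))
              = -((p : R p m) ^ (m + 2) * d) := by ring
          rw [this, pcast_top]
          ring

end KeyFacts

section ExpGen

open Wr

variable (p m : ℕ) [Fact p.Prime]

theorem sum_nsmul_sing (n : ℕ) (l : ZMod p) (c : R p m) :
    ∑ j : ZMod p, (n • sing p m l c) j = (n : R p m) * c := by
  have : ∀ j : ZMod p, (n • sing p m l c) j = n • (sing p m l c j) := fun j => rfl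
  calc ∑ j : ZMod p, (n • sing p m l c) j = ∑ j : ZMod p, n • (sing p m l c j) :=
        Finset.sum_congr rfl fun j _ => this j
    _ = n • ∑ j : ZMod p, sing p m l c j := (Finset.smul_sum).symm
    _ = (n : R p m) * c := by rw [sum_sing, nsmul_eq_mul]

theorem aw_pow (n : ℕ) : (aw p m) ^ n = ⟨n • sing p m 0 1, 0⟩ := by
  rw [base_pow' p m _ rfl]
  rfl

theorem pow_exp_mem (x : Wr p (m + 2)) : x ^ (p ^ (m + 2)) ∈ L p m := by
  by_cases hk : x.k = 0
  · rw [base_pow' p m x hk]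
    have hv : (p ^ (m + 2)) • x.v = 0 := by
      funext j
      show (p ^ (m + 2)) • (x.v j) = 0
      rw [nsmul_eq_mul]
      have : ((p ^ (m + 2) : ℕ) : R p m) = 0 := ZMod.natCast_self _
      rw [this, zero_mul]
    refine ⟨rfl, ?_, fun j => ⟨0, ?_⟩⟩
    · rw [hv]; simp
    · rw [hv]; simp
  · have e1 : p ^ (m + 2) = p * p ^ (m + 1) := by ring
    rw [e1, pow_p_mul p m x hk]
    refine ⟨rfl, ?_, fun j => ⟨∑ s : ZMod p, x.v s, ?_⟩⟩
    · rw [sum_const_vec]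
      have : (p : R p m) * (((p ^ (m + 1) : ℕ) : R p m) * ∑ s : ZMod p, x.v s)
          = (p : R p m) ^ (m + 2) * ∑ s : ZMod p, x.v s := by push_cast; ring
      rw [this, pcast_top, zero_mul]
    · show ((p ^ (m + 1) : ℕ) : R p m) * _ = _
      push_cast
      ring

theorem ael_pow_top : ael p m ^ (p ^ (m + 2)) = 1 := by
  rw [ael, ← map_pow]
  exact (mkW_eq_one_iff p m).mpr (pow_exp_mem p m _)

theorem ael_pow_ne : ael p m ^ (p ^ (m + 1)) ≠ 1 := by
  rw [ael, ← map_pow]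
  intro h
  obtain ⟨-, hs, -⟩ := (mkW_eq_one_iff p m).mp h
  rw [aw_pow] at hs
  have h1 : ∑ j : ZMod p, ((p ^ (m + 1)) • sing p m 0 1) j = ((p ^ (m + 1) : ℕ) : R p m) := by
    rw [sum_nsmul_sing, mul_one]
  rw [h1] at hs
  rw [Nat.cast_pow] at hs
  exact pcast_ne p m (by omega : m + 1 < m + 2) hs

theorem orderOf_ael : orderOf (ael p m) = p ^ (m + 2) :=
  orderOf_eq_prime_pow (ael_pow_ne p m) (ael_pow_top p m)

theorem exponent_eq : Monoid.exponent (Gp p m) = p ^ (m + 2) := by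
  apply Nat.dvd_antisymm
  · apply Monoid.exponent_dvd_of_forall_pow_eq_one
    intro g
    obtain ⟨x, rfl⟩ := mkW_surjective p m g
    rw [← map_pow]
    exact (mkW_eq_one_iff p m).mpr (pow_exp_mem p m x)
  · rw [← orderOf_ael p m]
    exact Monoid.order_dvd_exponent _

end ExpGen

section Homs

open Wr

variable (p m : ℕ) [Fact p.Prime]

/-- projection to the top -/
def piW : Wr p (m + 2) →* Multiplicative (ZMod p) where
  toFun x := Multiplicative.ofAdd x.k
  map_one' := rfl
  map_mul' x y := rfl

/-- the coordinate-sum homomorphism -/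
def fW : Wr p (m + 2) →* Multiplicative (ZMod p) where
  toFun x := Multiplicative.ofAdd (scast p m (∑ s : ZMod p, x.v s))
  map_one' := by
    have : ∑ s : ZMod p, (1 : Wr p (m + 2)).v s = 0 := by simp
    simp [this]
  map_mul' x y := by
    have h : ∑ s : ZMod p, (x * y).v s = (∑ s : ZMod p, x.v s) + ∑ s : ZMod p, y.v s := by
      rw [mul_v]
      simp only [Pi.add_apply]
      rw [Finset.sum_add_distrib, sum_shf]
    simp only [h, map_add]
    rfl

theorem piW_L (x : Wr p (m + 2)) (hx : x ∈ L p m) : piW p m x = 1 := by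
  obtain ⟨hk, -, -⟩ := hx
  show Multiplicative.ofAdd x.k = 1
  rw [hk]
  rfl

theorem fW_L (x : Wr p (m + 2)) (hx : x ∈ L p m) : fW p m x = 1 := by
  obtain ⟨-, hs, -⟩ := hx
  show Multiplicative.ofAdd (scast p m (∑ s : ZMod p, x.v s)) = 1
  rw [hs, map_zero]
  rfl

def piQ : Gp p m →* Multiplicative (ZMod p) :=
  QuotientGroup.lift (L p m) (piW p m) (piW_L p m)

def fQ : Gp p m →* Multiplicative (ZMod p) :=
  QuotientGroup.lift (L p m) (fW p m) (fW_L p m)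

theorem piQ_mk (x : Wr p (m + 2)) : piQ p m (mkW p m x) = Multiplicative.ofAdd x.k := rfl

theorem fQ_mk (x : Wr p (m + 2)) :
    fQ p m (mkW p m x) = Multiplicative.ofAdd (scast p m (∑ s : ZMod p, x.v s)) := rfl

theorem piQ_tel : piQ p m (tel p m) = Multiplicative.ofAdd (1 : ZMod p) := rfl

theorem fQ_ael : fQ p m (ael p m) = Multiplicative.ofAdd (1 : ZMod p) := by
  rw [ael, fQ_mk]
  congr 1
  show scast p m (∑ s : ZMod p, sing p m 0 1 s) = 1
  rw [sum_sing, map_one]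

theorem ofAdd_one_ne : (Multiplicative.ofAdd (1 : ZMod p)) ≠ 1 := by
  intro h
  have h1 : (1 : ZMod p) = 0 := h
  exact one_ne_zero h1

/-- From a generating pair, find an element with both invariants nonzero. -/
theorem exists_good (x y : Gp p m) (hgen : closure ({x, y} : Set (Gp p m)) = ⊤) :
    ∃ u ∈ ({x, y, x * y} : Set (Gp p m)), piQ p m u ≠ 1 ∧ fQ p m u ≠ 1 := by
  have hpi : ¬(piQ p m x = 1 ∧ piQ p m y = 1) := by
    rintro ⟨h1, h2⟩
    have hle : closure ({x, y} : Set (Gp p m)) ≤ (piQ p m).ker := by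
      rw [closure_le]
      rintro g (rfl | rfl)
      · exact h1
      · exact h2
    rw [hgen] at hle
    have := hle (Set.mem_univ (tel p m))
    rw [MonoidHom.mem_ker, piQ_tel] at this
    exact ofAdd_one_ne p this
  have hf : ¬(fQ p m x = 1 ∧ fQ p m y = 1) := by
    rintro ⟨h1, h2⟩
    have hle : closure ({x, y} : Set (Gp p m)) ≤ (fQ p m).ker := by
      rw [closure_le]
      rintro g (rfl | rfl)
      · exact h1
      · exact h2
    rw [hgen] at hle
    have := hle (Set.mem_univ (ael p m))
    rw [MonoidHom.mem_ker, fQ_ael] at this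
    exact ofAdd_one_ne p this
  by_cases hx1 : piQ p m x ≠ 1 ∧ fQ p m x ≠ 1
  · exact ⟨x, by simp, hx1⟩
  by_cases hy1 : piQ p m y ≠ 1 ∧ fQ p m y ≠ 1
  · exact ⟨y, by simp, hy1⟩
  refine ⟨x * y, by simp, ?_, ?_⟩
  · rw [map_mul]
    by_cases hpx : piQ p m x = 1
    · have hpy : piQ p m y ≠ 1 := fun h => hpi ⟨hpx, h⟩
      rw [hpx, one_mul]
      exact hpy
    · -- piQ x ≠ 1, so fQ x = 1 (x not good), so fQ y ≠ 1, so piQ y = 1 (y not good)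
      have hfx : fQ p m x = 1 := by
        by_contra hfx
        exact hx1 ⟨hpx, hfx⟩
      have hfy : fQ p m y ≠ 1 := fun h => hf ⟨hfx, h⟩
      have hpy : piQ p m y = 1 := by
        by_contra hpy
        exact hy1 ⟨hpy, hfy⟩
      rw [hpy, mul_one]
      exact hpx
  · rw [map_mul]
    by_cases hfx : fQ p m x = 1
    · have hfy : fQ p m y ≠ 1 := fun h => hf ⟨hfx, h⟩
      rw [hfx, one_mul]
      exact hfy
    · have hpx : piQ p m x = 1 := by
        by_contra hpx
        exact hx1 ⟨hpx, hfx⟩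
      have hpy : piQ p m y ≠ 1 := fun h => hpi ⟨hpx, h⟩
      have hfy : fQ p m y = 1 := by
        by_contra hfy
        exact hy1 ⟨hpy, hfy⟩
      rw [hfy, mul_one]
      exact hfx

end Homs

section NotBeauville

open Wr

variable (p m : ℕ) [Fact p.Prime]

theorem zel_mem_zpowers (u : Gp p m) (hpi : piQ p m u ≠ 1) (hf : fQ p m u ≠ 1) :
    zel p m ∈ Subgroup.zpowers u := by
  obtain ⟨x, rfl⟩ := mkW_surjective p m u
  have hk : x.k ≠ 0 := by
    intro h
    apply hpi
    rw [piQ_mk, h]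
    rfl
  set c := (scast p m (∑ s : ZMod p, x.v s)).val with hcdef
  have hu : mkW p m x ^ (p ^ (m + 1)) = zel p m ^ c := key_identity p m x hk
  have hsc : scast p m (∑ s : ZMod p, x.v s) ≠ 0 := by
    intro h
    apply hf
    rw [fQ_mk, h]
    rfl
  have hc0 : ¬ p ∣ c := by
    intro hdvd
    have h1 : c < p := ZMod.val_lt _
    have h2 : c ≠ 0 := by
      intro h
      exact hsc (ZMod.val_eq_zero _ |>.mp h)
    have := Nat.le_of_dvd (Nat.pos_of_ne_zero h2) hdvd
    omega
  have hcast : ((c : ZMod p)) ≠ 0 := by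
    rw [Ne, ZMod.natCast_eq_zero_iff]
    exact hc0
  set d := ((c : ZMod p)⁻¹).val with hddef
  have hmod : c * d ≡ 1 [MOD p] := by
    apply (ZMod.natCast_eq_natCast_iff _ _ _).mp
    have : ((c * d : ℕ) : ZMod p) = (c : ZMod p) * ((d : ℕ) : ZMod p) := by push_cast; ring
    rw [this, hddef]
    have h3 : (((((c : ZMod p)⁻¹).val : ℕ)) : ZMod p) = (c : ZMod p)⁻¹ :=
      ZMod.natCast_rightInverse _
    rw [h3, mul_inv_cancel₀ hcast]
    norm_num
  have hzel : zel p m ^ (c * d) = zel p m := by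
    have hord : orderOf (zel p m) ∣ p := orderOf_dvd_iff_pow_eq_one.mpr (zel_pow_p p m)
    have : zel p m ^ (c * d) = zel p m ^ 1 :=
      (pow_eq_pow_iff_modEq).mpr (Nat.ModEq.of_dvd hord hmod)
    rwa [pow_one] at this
  have hfinal : zel p m = (mkW p m x) ^ (p ^ (m + 1) * d) := by
    rw [pow_mul, hu, ← pow_mul, hzel]
  refine ⟨((p ^ (m + 1) * d : ℕ) : ℤ), ?_⟩
  show (mkW p m) x ^ ((p ^ (m + 1) * d : ℕ) : ℤ) = zel p m
  rw [zpow_natCast, ← hfinal]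

theorem zel_mem_sigma (x y : Gp p m) (hgen : closure ({x, y} : Set (Gp p m)) = ⊤) :
    zel p m ∈ SigmaSet x y := by
  obtain ⟨u, hu, hpi, hf⟩ := exists_good p m x y hgen
  have hz := zel_mem_zpowers p m u hpi hf
  rw [SigmaSet, Set.mem_iUnion]
  refine ⟨1, ?_⟩
  simp only [one_mul, inv_one, mul_one]
  simp only [Set.mem_insert_iff, Set.mem_singleton_iff] at hu
  rcases hu with rfl | rfl | rfl
  · exact Or.inl (Or.inl hz)
  · exact Or.inl (Or.inr hz)
  · exact Or.inr hz

theorem not_beauville : ¬ IsBeauvilleGroup (Gp p m) := by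
  rintro ⟨x₁, y₁, x₂, y₂, h₁, h₂, hint⟩
  have hz : zel p m ∈ SigmaSet x₁ y₁ ∩ SigmaSet x₂ y₂ :=
    ⟨zel_mem_sigma p m x₁ y₁ h₁, zel_mem_sigma p m x₂ y₂ h₂⟩
  rw [hint] at hz
  exact zel_ne_one p m hz

end NotBeauville

section Generation

open Wr

variable (p m : ℕ) [Fact p.Prime]

theorem tw_pow (n : ℕ) : (tw p m) ^ n = ⟨0, (n : ZMod p)⟩ := by
  rw [pow_formula]
  ext j
  · show (∑ i ∈ Finset.range n, shf ((i : ZMod p) * (tw p m).k) (tw p m).v) j = (0 : Vec p (m + 2)) j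
    rw [Finset.sum_apply]
    have : ∀ i ∈ Finset.range n, shf ((i : ZMod p) * (tw p m).k) (tw p m).v j = 0 := by
      intro i _
      rfl
    rw [Finset.sum_congr rfl this]
    simp
  · show n • (1 : ZMod p) = (n : ZMod p)
    rw [nsmul_eq_mul, mul_one]

theorem base_mul (v w : Vec p (m + 2)) :
    (⟨v, 0⟩ : Wr p (m + 2)) * ⟨w, 0⟩ = ⟨v + w, 0⟩ := by
  ext j
  · show (v + shf 0 w) j = (v + w) j
    rw [shf_zero]
  · show (0 : ZMod p) + 0 = 0
    simp

theorem decomp (x : Wr p (m + 2)) : x = ⟨x.v, 0⟩ * (tw p m) ^ (x.k).val := by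
  rw [tw_pow]
  ext j
  · show x.v j = (x.v + shf 0 (0 : Vec p (m + 2))) j
    simp
  · show x.k = 0 + ((x.k.val : ℕ) : ZMod p)
    rw [zero_add, ZMod.natCast_rightInverse x.k]

theorem conj_single (l : ZMod p) :
    (tw p m) ^ (l.val) * aw p m * ((tw p m) ^ (l.val))⁻¹ = ⟨sing p m l 1, 0⟩ := by
  rw [conj_base p m _ _ rfl]
  have hk : ((tw p m) ^ (l.val)).k = l := by
    rw [tw_pow]
    exact ZMod.natCast_rightInverse l
  rw [hk]
  congr 1
  funext j
  show (aw p m).v (j - l) = sing p m l 1 j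
  show (if j - l = 0 then (1 : R p m) else 0) = if j = l then 1 else 0
  congr 1
  simp [sub_eq_zero]

theorem single_pow (l : ZMod p) (c : R p m) :
    (⟨sing p m l 1, 0⟩ : Wr p (m + 2)) ^ (c.val) = ⟨sing p m l c, 0⟩ := by
  rw [base_pow' p m _ rfl]
  congr 1
  funext j
  show c.val • (sing p m l 1 j) = sing p m l c j
  show c.val • (if j = l then (1 : R p m) else 0) = if j = l then c else 0
  by_cases h : j = l
  · rw [if_pos h, if_pos h, nsmul_eq_mul, mul_one]
    exact ZMod.natCast_rightInverse c
  · rw [if_neg h, if_neg h, smul_zero]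

theorem gen_top : closure ({ael p m, tel p m} : Set (Gp p m)) = ⊤ := by
  rw [eq_top_iff]
  intro g _
  obtain ⟨x, rfl⟩ := mkW_surjective p m g
  set H := closure ({ael p m, tel p m} : Set (Gp p m)) with hH
  have htel : tel p m ∈ H := subset_closure (by simp)
  have hael : ael p m ∈ H := subset_closure (by simp)
  have hsingle : ∀ (l : ZMod p) (c : R p m), mkW p m ⟨sing p m l c, 0⟩ ∈ H := by
    intro l c
    have h1 : mkW p m ⟨sing p m l c, 0⟩
        = (tel p m ^ l.val * ael p m * (tel p m ^ l.val)⁻¹) ^ c.val := by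
      rw [tel, ael, ← map_pow, ← map_inv, ← map_mul, ← map_mul, ← map_pow,
        conj_single, single_pow]
    rw [h1]
    exact pow_mem (mul_mem (mul_mem (pow_mem htel _) hael) (inv_mem (pow_mem htel _))) _
  have hbase : ∀ v : Vec p (m + 2), mkW p m ⟨v, 0⟩ ∈ H := by
    intro v
    let A : AddSubgroup (Vec p (m + 2)) :=
      { carrier := {v | mkW p m ⟨v, 0⟩ ∈ H}
        zero_mem' := by
          show mkW p m ⟨0, 0⟩ ∈ H
          have : (⟨0, 0⟩ : Wr p (m + 2)) = 1 := rfl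
          rw [this, map_one]
          exact one_mem H
        add_mem' := by
          intro a b ha hb
          show mkW p m ⟨a + b, 0⟩ ∈ H
          rw [← base_mul, map_mul]
          exact mul_mem ha hb
        neg_mem' := by
          intro a ha
          show mkW p m ⟨-a, 0⟩ ∈ H
          have : (⟨-a, 0⟩ : Wr p (m + 2)) = (⟨a, 0⟩ : Wr p (m + 2))⁻¹ := by
            ext j
            · show (-a) j = (-(shf (-0) a)) j
              simp
            · show (0 : ZMod p) = -0
              simp
          rw [this, map_inv]
          exact inv_mem ha }
    have hv : v = ∑ l : ZMod p, sing p m l (v l) := by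
      funext j
      rw [Finset.sum_apply]
      show v j = ∑ l : ZMod p, (if j = l then v l else 0)
      rw [Finset.sum_ite_eq]
      simp
    have : v ∈ A := by
      rw [hv]
      exact A.sum_mem fun l _ => hsingle l (v l)
    exact this
  have hx : mkW p m x = mkW p m ⟨x.v, 0⟩ * (tel p m) ^ (x.k).val := by
    rw [tel, ← map_pow, ← map_mul]
    exact congrArg (mkW p m) (decomp p m x)
  rw [hx]
  exact mul_mem (hbase x.v) (pow_mem htel _)

end Generation

section CardLower

open Wr

variable (p m : ℕ) [Fact p.Prime]

/-- second independent element of the power subgroup -/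
def wel : Gp p m := ael p m ^ (p ^ (m + 1))

theorem uw_pow_eq_zel : mkW p m (uw p m) ^ (p ^ (m + 1)) = zel p m := by
  have hk : (uw p m).k ≠ 0 := one_ne_zero
  rw [key_identity p m _ hk]
  have h1 : ∑ s : ZMod p, (uw p m).v s = 1 := sum_sing p m 0 1
  rw [h1, map_one, ZMod.val_one, pow_one]

theorem zel_mem_pow : zel p m ∈ powSubgroup (Gp p m) (p ^ (m + 1)) := by
  rw [← uw_pow_eq_zel]
  exact subset_closure ⟨mkW p m (uw p m), rfl⟩

theorem wel_mem_pow : wel p m ∈ powSubgroup (Gp p m) (p ^ (m + 1)) :=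
  subset_closure ⟨ael p m, rfl⟩

theorem nat_cancel (i i' : ℕ) (hi : i < p) (hi' : i' < p)
    (h : (p : R p m) ^ (m + 1) * (i : R p m) = (p : R p m) ^ (m + 1) * (i' : R p m)) :
    i = i' := by
  have h1 : ((p ^ (m + 1) * i : ℕ) : R p m) = ((p ^ (m + 1) * i' : ℕ) : R p m) := by
    push_cast
    exact h
  have h2 : p ^ (m + 1) * i ≡ p ^ (m + 1) * i' [MOD p ^ (m + 2)] :=
    (ZMod.natCast_eq_natCast_iff _ _ _).mp h1
  have hp1 : 0 < p ^ (m + 1) := pow_pos (Fact.out : p.Prime).pos _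
  have hlt : p ^ (m + 1) * i < p ^ (m + 2) := by
    have : p ^ (m + 2) = p ^ (m + 1) * p := pow_succ _ _
    rw [this]
    exact mul_lt_mul_of_pos_left hi hp1
  have hlt' : p ^ (m + 1) * i' < p ^ (m + 2) := by
    have : p ^ (m + 2) = p ^ (m + 1) * p := pow_succ _ _
    rw [this]
    exact mul_lt_mul_of_pos_left hi' hp1
  have h3 : p ^ (m + 1) * i = p ^ (m + 1) * i' := by
    have := h2
    unfold Nat.ModEq at this
    rwa [Nat.mod_eq_of_lt hlt, Nat.mod_eq_of_lt hlt'] at this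
  exact Nat.eq_of_mul_eq_mul_left hp1 h3

theorem zw_wel_repr (i j : ℕ) :
    zel p m ^ i * wel p m ^ j
      = mkW p m ⟨(fun _ => (i : R p m) * (p : R p m) ^ m) + (p ^ (m + 1) * j) • sing p m 0 1, 0⟩ := by
  have h1 : zel p m ^ i = mkW p m ⟨fun _ => (i : R p m) * (p : R p m) ^ m, 0⟩ := by
    rw [zel, ← map_pow, zw_pow]
  have h2 : wel p m ^ j = mkW p m ⟨(p ^ (m + 1) * j) • sing p m 0 1, 0⟩ := by
    rw [wel, ael, ← map_pow, ← map_pow, ← pow_mul, aw_pow]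
  rw [h1, h2, ← map_mul, base_mul]

theorem pow_inj (i j i' j' : ℕ) (hi : i < p) (hj : j < p) (hi' : i' < p) (hj' : j' < p)
    (h : zel p m ^ i * wel p m ^ j = zel p m ^ i' * wel p m ^ j') : i = i' ∧ j = j' := by
  rw [zw_wel_repr, zw_wel_repr] at h
  have hmem := (mkW_eq_mkW p m).mp h
  rw [base_inv_mul] at hmem
  obtain ⟨-, hs, hd⟩ := hmem
  -- the difference vector
  set A : Vec p (m + 2) := (fun _ => (i : R p m) * (p : R p m) ^ m) + (p ^ (m + 1) * j) • sing p m 0 1 with hA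
  set B : Vec p (m + 2) := (fun _ => (i' : R p m) * (p : R p m) ^ m) + (p ^ (m + 1) * j') • sing p m 0 1 with hB
  -- coordinate 1
  have hA1 : A 1 = (i : R p m) * (p : R p m) ^ m := by
    show (i : R p m) * (p : R p m) ^ m + ((p ^ (m + 1) * j) • sing p m 0 1) 1 = _
    have : ((p ^ (m + 1) * j) • sing p m 0 1) 1 = (p ^ (m + 1) * j) • (sing p m 0 1 1) := rfl
    rw [this]
    have h10 : sing p m 0 1 1 = 0 := by
      show (if (1 : ZMod p) = 0 then (1 : R p m) else 0) = 0
      rw [if_neg one_ne_zero]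
    rw [h10, smul_zero, add_zero]
  have hB1 : B 1 = (i' : R p m) * (p : R p m) ^ m := by
    show (i' : R p m) * (p : R p m) ^ m + ((p ^ (m + 1) * j') • sing p m 0 1) 1 = _
    have : ((p ^ (m + 1) * j') • sing p m 0 1) 1 = (p ^ (m + 1) * j') • (sing p m 0 1 1) := rfl
    rw [this]
    have h10 : sing p m 0 1 1 = 0 := by
      show (if (1 : ZMod p) = 0 then (1 : R p m) else 0) = 0
      rw [if_neg one_ne_zero]
    rw [h10, smul_zero, add_zero]
  obtain ⟨c, hc⟩ := hd 1
  have hc' : -(A 1) + B 1 = (p : R p m) ^ (m + 1) * c := hc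
  rw [hA1, hB1] at hc'
  have hii : i = i' := by
    apply nat_cancel p m i i' hi hi'
    linear_combination (-(p : R p m)) * hc' + (-c) * pcast_top p m
  -- now sums
  have hsA : ∑ l : ZMod p, A l = (p : R p m) * ((i : R p m) * (p : R p m) ^ m)
      + ((p ^ (m + 1) * j : ℕ) : R p m) := by
    rw [hA]
    simp only [Pi.add_apply]
    rw [Finset.sum_add_distrib, sum_const_vec, sum_nsmul_sing, mul_one]
  have hsB : ∑ l : ZMod p, B l = (p : R p m) * ((i' : R p m) * (p : R p m) ^ m)
      + ((p ^ (m + 1) * j' : ℕ) : R p m) := by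
    rw [hB]
    simp only [Pi.add_apply]
    rw [Finset.sum_add_distrib, sum_const_vec, sum_nsmul_sing, mul_one]
  have hs' : ∑ l : ZMod p, (-A + B) l = -(∑ l : ZMod p, A l) + ∑ l : ZMod p, B l := by
    simp only [Pi.add_apply, Pi.neg_apply]
    rw [Finset.sum_add_distrib, Finset.sum_neg_distrib]
  rw [hs', hsA, hsB] at hs
  have hjj : j = j' := by
    apply nat_cancel p m j j' hj hj'
    have hcast : ∀ n : ℕ, ((p ^ (m + 1) * n : ℕ) : R p m) = (p : R p m) ^ (m + 1) * (n : R p m) := by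
      intro n; push_cast; ring
    rw [hcast, hcast, hii] at hs
    linear_combination -hs
  exact ⟨hii, hjj⟩

theorem card_lower : p ^ 2 ≤ Nat.card (powSubgroup (Gp p m) (p ^ (m + 1))) := by
  let Ψ : Fin p × Fin p → (powSubgroup (Gp p m) (p ^ (m + 1))) := fun ij =>
    ⟨zel p m ^ (ij.1 : ℕ) * wel p m ^ (ij.2 : ℕ),
      mul_mem (pow_mem (zel_mem_pow p m) _) (pow_mem (wel_mem_pow p m) _)⟩
  have hinj : Function.Injective Ψ := by
    rintro ⟨i, j⟩ ⟨i', j'⟩ h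
    have h2 : zel p m ^ (i : ℕ) * wel p m ^ (j : ℕ)
        = zel p m ^ (i' : ℕ) * wel p m ^ (j' : ℕ) := congrArg Subtype.val h
    obtain ⟨h3, h4⟩ := pow_inj p m _ _ _ _ i.isLt j.isLt i'.isLt j'.isLt h2
    simp only [Prod.mk.injEq, Fin.ext_iff]
    exact ⟨h3, h4⟩
  calc p ^ 2 = Nat.card (Fin p × Fin p) := by
        simp [Nat.card_eq_fintype_card, sq]
    _ ≤ Nat.card (powSubgroup (Gp p m) (p ^ (m + 1))) :=
        Nat.card_le_card_of_injective Ψ hinj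

end CardLower

section Assembly

open Wr

variable (p m : ℕ) [Fact p.Prime]

theorem isPGroup_Gp : IsPGroup p (Gp p m) := by
  intro g
  refine ⟨m + 2, ?_⟩
  obtain ⟨x, rfl⟩ := mkW_surjective p m g
  rw [← map_pow]
  exact (mkW_eq_one_iff p m).mpr (pow_exp_mem p m x)

end Assembly

theorem exists_large_non_beauville_group_with_large_power_subgroup
    {p : ℕ} (hp : p.Prime) (hp5 : 5 ≤ p) (C : ℕ) (hC : 0 < C) :
    ∃ (G : Type) (_ : Group G), Finite G ∧ IsPGroup p G ∧
      (∃ a b : G, closure ({a, b} : Set G) = ⊤) ∧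
      C < Nat.card G ∧
      ∃ e : ℕ, Monoid.exponent G = p ^ e ∧
        p ^ 2 ≤ Nat.card (powSubgroup G (p ^ (e - 1))) ∧
        ¬ IsBeauvilleGroup G := by
  haveI : Fact p.Prime := ⟨hp⟩
  refine ⟨Gp p C, inferInstance, inferInstance, isPGroup_Gp p C,
    ⟨ael p C, tel p C, gen_top p C⟩, ?_, C + 2, exponent_eq p C, ?_, not_beauville p C⟩
  · have h1 : p ^ (C + 2) ∣ Nat.card (Gp p C) := by
      rw [← orderOf_ael p C]
      exact orderOf_dvd_natCard _
    have h2 : 0 < Nat.card (Gp p C) := Nat.card_pos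
    have h3 : p ^ (C + 2) ≤ Nat.card (Gp p C) := Nat.le_of_dvd h2 h1
    have h4 : C < 2 ^ C := Nat.lt_two_pow_self
    have h5 : (2 : ℕ) ^ C ≤ 2 ^ (C + 2) := Nat.pow_le_pow_right (by norm_num) (by omega)
    have h6 : (2 : ℕ) ^ (C + 2) ≤ p ^ (C + 2) := Nat.pow_le_pow_left (by omega) _
    omega
  · have he : C + 2 - 1 = C + 1 := rfl
    rw [he]
    exact card_lower p C
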